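/- Let n, p ≥ 1 and let A be any real n × p matrix. Define Ω(A) = (2AᵀA + I_p) − 4 Aᵀ (I_n + A(AᵀA + I_p)^{−1}Aᵀ)^{−1} A. Then Ω(A) is a symmetric positive definite matrix, and every eigenvalue of Ω(A) is at most 1 (equivalently, 0 ≺ Ω(A) ⪯ I_p in the Loewner order). In particular, for every real n × p matrix W and every λ ∈ (0,∞)ⁿ with Λ = diag(λ), the quadratic form G(θ, λ) = θᵀ[(2WᵀΛW + I_p) − 4WᵀΛ(Λ + ΛW(WᵀΛW + I_p)^{−1}WᵀΛ)^{−1}ΛW]θ is a positive definite quadratic form in θ ∈ ℝ^p. -/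

import Mathlib

open Matrix

section RobitAux

variable {m q : Type*} [Fintype m] [Fintype q] [DecidableEq m] [DecidableEq q]

lemma psd_B (A : Matrix m q ℝ) : (Aᵀ * A).PosSemidef := by
  simpa using Matrix.posSemidef_conjTranspose_mul_self A

lemma pd_C (A : Matrix m q ℝ) : (2 * (Aᵀ * A) + 1).PosDef := by
  have hB := psd_B A
  have : (2 * (Aᵀ * A)).PosSemidef := by rw [two_mul]; exact hB.add hB
  exact Matrix.PosDef.posSemidef_add this Matrix.PosDef.one

lemma pd_S (A : Matrix m q ℝ) : (Aᵀ * A + 1).PosDef :=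
  Matrix.PosDef.posSemidef_add (psd_B A) Matrix.PosDef.one

lemma omega_eq (A : Matrix m q ℝ) :
    2 * (Aᵀ * A) + 1 - 4 * (Aᵀ * ((1 : Matrix m m ℝ) + A * (Aᵀ * A + 1)⁻¹ * Aᵀ)⁻¹ * A)
      = (2 * (Aᵀ * A) + 1)⁻¹ := by
  have hB := psd_B A
  have hC := pd_C A
  have hS := pd_S A
  set B := Aᵀ * A with hBdef
  haveI : Invertible (2 * B + 1) := hC.isUnit.invertible
  haveI : Invertible (B + 1) := hS.isUnit.invertible
  have key : (B + 1)⁻¹ * B * (2 * B + 1)⁻¹ = (B + 1)⁻¹ - (2 * B + 1)⁻¹ := by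
    have hb : B = (2 * B + 1) - (B + 1) := by noncomm_ring
    nth_rewrite 2 [hb]
    rw [Matrix.mul_sub, Matrix.sub_mul]
    simp [Matrix.mul_assoc, Matrix.mul_inv_cancel_right_of_invertible, Matrix.inv_mul_cancel_left_of_invertible, Matrix.mul_inv_cancel_left_of_invertible, Matrix.inv_mul_cancel_right_of_invertible, Matrix.inv_mul_of_invertible, Matrix.mul_inv_of_invertible]
  have hMinv : ((1 : Matrix m m ℝ) + A * (B + 1)⁻¹ * Aᵀ)⁻¹ = 1 - A * (2 * B + 1)⁻¹ * Aᵀ := by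
    apply Matrix.inv_eq_right_inv
    have expand : ((1 : Matrix m m ℝ) + A * (B + 1)⁻¹ * Aᵀ) * (1 - A * (2 * B + 1)⁻¹ * Aᵀ)
        = 1 + A * ((B + 1)⁻¹ - (2 * B + 1)⁻¹ - (B + 1)⁻¹ * B * (2 * B + 1)⁻¹) * Aᵀ := by
      rw [hBdef]
      noncomm_ring
      simp [Matrix.mul_add, Matrix.add_mul, Matrix.mul_smul, Matrix.smul_mul, Matrix.mul_assoc]
    rw [expand, key]
    simp
  rw [hMinv]
  refine (Matrix.inv_eq_left_inv ?_).symm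
  have hA' : Aᵀ * ((1 : Matrix m m ℝ) - A * (2 * B + 1)⁻¹ * Aᵀ) * A
      = B - B * (2 * B + 1)⁻¹ * B := by
    rw [hBdef]
    noncomm_ring
    simp [Matrix.mul_add, Matrix.add_mul, Matrix.mul_smul, Matrix.smul_mul, Matrix.mul_assoc]
  rw [hA']
  have hBC : B * (2 * B + 1)⁻¹ * B * (2 * B + 1) = B * B := by
    simp only [Matrix.mul_assoc]
    rw [show B * (2 * B + 1) = (2 * B + 1) * B from by noncomm_ring,
      Matrix.inv_mul_cancel_left_of_invertible]
  rw [Matrix.sub_mul, Matrix.mul_assoc 4, Matrix.sub_mul, hBC]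
  noncomm_ring

lemma one_sub_inv_psd (A : Matrix m q ℝ) :
    ((1 : Matrix q q ℝ) - (2 * (Aᵀ * A) + 1)⁻¹).PosSemidef := by
  have hB := psd_B A
  have hC := pd_C A
  set B := Aᵀ * A with hBdef
  haveI : Invertible (2 * B + 1) := hC.isUnit.invertible
  have h2B : (2 * B).PosSemidef := by rw [two_mul]; exact hB.add hB
  have h4B2 : ((2 * B) * (2 * B)).PosSemidef := by
    have h := Matrix.posSemidef_conjTranspose_mul_self (2 * B)
    rwa [h2B.1] at h
  have hP : ((2 * B) * (2 * B) + 2 * B).PosSemidef := h4B2.add h2B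
  have hsand := hP.mul_mul_conjTranspose_same (2 * B + 1)⁻¹
  rw [hC.inv.isHermitian.eq] at hsand
  have heq : (1 : Matrix q q ℝ) - (2 * B + 1)⁻¹
      = (2 * B + 1)⁻¹ * ((2 * B) * (2 * B) + 2 * B) * (2 * B + 1)⁻¹ := by
    rw [show (2 * B) * (2 * B) + 2 * B = (2 * B) * (2 * B + 1) from by noncomm_ring]
    simp only [Matrix.mul_assoc, Matrix.mul_inv_cancel_right_of_invertible,
      Matrix.mul_inv_of_invertible, Matrix.mul_one]
    have h2 : (2 * B + 1)⁻¹ * (2 * B) + (2 * B + 1)⁻¹ = 1 := by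
      have h := Matrix.inv_mul_of_invertible (2 * B + 1)
      rw [Matrix.mul_add, Matrix.mul_one] at h
      exact h
    exact (eq_sub_of_add_eq h2).symm
  rw [heq]
  exact hsand

end RobitAux

/-- `Ω(A) = (2AᵀA + I) − 4Aᵀ(I + A(AᵀA + I)⁻¹Aᵀ)⁻¹A` is symmetric positive definite with all
eigenvalues at most `1` (i.e. `0 ≺ Ω(A) ⪯ I` in the Loewner order), and consequently the
quadratic form `G(θ, λ)` appearing in Step V of the proof of Theorem 1 is positive definite. -/
theorem robit_Omega_posDef_le_one (n p : ℕ) (hn : 1 ≤ n) (hp : 1 ≤ p)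
    (A : Matrix (Fin n) (Fin p) ℝ) :
    (2 * (Aᵀ * A) + 1 -
        4 * (Aᵀ * ((1 : Matrix (Fin n) (Fin n) ℝ) + A * (Aᵀ * A + 1)⁻¹ * Aᵀ)⁻¹ * A)).IsSymm ∧
    (2 * (Aᵀ * A) + 1 -
        4 * (Aᵀ * ((1 : Matrix (Fin n) (Fin n) ℝ) + A * (Aᵀ * A + 1)⁻¹ * Aᵀ)⁻¹ * A)).PosDef ∧
    ((1 : Matrix (Fin p) (Fin p) ℝ) -
        (2 * (Aᵀ * A) + 1 -
          4 * (Aᵀ * ((1 : Matrix (Fin n) (Fin n) ℝ) + A * (Aᵀ * A + 1)⁻¹ * Aᵀ)⁻¹ * A))).PosSemidef ∧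
    ∀ (W : Matrix (Fin n) (Fin p) ℝ) (l : Fin n → ℝ), (∀ i, 0 < l i) →
      ∀ θ : Fin p → ℝ, θ ≠ 0 →
        0 < θ ⬝ᵥ ((2 * (Wᵀ * Matrix.diagonal l * W) + 1 -
            4 * (Wᵀ * Matrix.diagonal l *
              (Matrix.diagonal l + Matrix.diagonal l * W * (Wᵀ * Matrix.diagonal l * W + 1)⁻¹ *
                Wᵀ * Matrix.diagonal l)⁻¹ * Matrix.diagonal l * W)) *ᵥ θ) := by
  refine ⟨?_, ?_, ?_, ?_⟩
  · rw [omega_eq A]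
    have h := (pd_C A).inv.isHermitian
    rw [Matrix.IsHermitian, Matrix.conjTranspose_eq_transpose_of_trivial] at h
    exact h
  · rw [omega_eq A]
    exact (pd_C A).inv
  · rw [omega_eq A]
    exact one_sub_inv_psd A
  · intro W l hl θ hθ
    set D := Matrix.diagonal l with hDdef
    set R := Matrix.diagonal (fun i => Real.sqrt (l i)) with hRdef
    have hRR : R * R = D := by
      rw [hRdef, hDdef, Matrix.diagonal_mul_diagonal]
      exact congrArg Matrix.diagonal (funext fun i => Real.mul_self_sqrt (hl i).le)
    set A' := R * W with hAdef
    have hRpd : R.PosDef := Matrix.posDef_diagonal_iff.mpr fun i => Real.sqrt_pos.mpr (hl i)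
    haveI : Invertible R := hRpd.isUnit.invertible
    have hRt : Rᵀ = R := Matrix.diagonal_transpose _
    have hAtA : A'ᵀ * A' = Wᵀ * D * W := by
      rw [hAdef, Matrix.transpose_mul, hRt, ← hRR]
      simp [Matrix.mul_assoc]
    set S := Wᵀ * D * W + 1 with hSdef
    have hX : D + D * W * S⁻¹ * Wᵀ * D
        = R * ((1 : Matrix (Fin n) (Fin n) ℝ) + A' * S⁻¹ * A'ᵀ) * R := by
      rw [hAdef, Matrix.transpose_mul, hRt, ← hRR]
      simp [Matrix.mul_add, Matrix.add_mul, Matrix.mul_assoc]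
    have hmid : Wᵀ * D * (D + D * W * S⁻¹ * Wᵀ * D)⁻¹ * D * W
        = A'ᵀ * ((1 : Matrix (Fin n) (Fin n) ℝ) + A' * S⁻¹ * A'ᵀ)⁻¹ * A' := by
      rw [hX, Matrix.mul_inv_rev, Matrix.mul_inv_rev, hAdef, Matrix.transpose_mul, hRt, ← hRR]
      simp [Matrix.mul_assoc, Matrix.mul_inv_cancel_left_of_invertible,
        Matrix.inv_mul_cancel_left_of_invertible]
    have hS2 : S = A'ᵀ * A' + 1 := by rw [hAtA]
    rw [hmid, hS2, ← hAtA, omega_eq A']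
    have hpos := (pd_C A').inv.dotProduct_mulVec_pos hθ
    simpa using hpos
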